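/- Let N ≥ 2. For every N-GHZ state ψ ∈ ℂ^{2^N} there exist angles θ_1,…,θ_N, φ_1,…,φ_N ∈ ℝ and 2×2 unitaries V_1,…,V_N such that, setting A = ⊗_{l=1}^N V_l A(θ_l,φ_l) V_l^† and B = ⊗_{l=1}^N V_l σ_Z V_l^†, the common +1 eigenspace of A and B is one-dimensional and spanned by ψ. -/

import Mathlib

open Matrix Finset

/-- Tensor product of `N` 2×2 complex matrices, indexed by bit strings. -/
noncomputable def tensorN {N : ℕ} (M : Fin N → Matrix (Fin 2) (Fin 2) ℂ) :
    Matrix (Fin N → Fin 2) (Fin N → Fin 2) ℂ :=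
  fun i j => ∏ l, M l (i l) (j l)

/-- The spin observable `A(θ,φ)`. -/
noncomputable def spinA (θ φ : ℝ) : Matrix (Fin 2) (Fin 2) ℂ :=
  !![(Real.cos θ : ℂ), Complex.exp (-(φ : ℂ) * Complex.I) * (Real.sin θ : ℂ);
     Complex.exp ((φ : ℂ) * Complex.I) * (Real.sin θ : ℂ), -(Real.cos θ : ℂ)]

/-- The Pauli matrix `σ_Z`. -/
def sigmaZ : Matrix (Fin 2) (Fin 2) ℂ := !![1, 0; 0, -1]

/-- The standard GHZ state `(|0…0⟩ + |1…1⟩)/√2` in `ℂ^{2^N}`. -/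
noncomputable def ghzN (N : ℕ) : (Fin N → Fin 2) → ℂ :=
  (Real.sqrt 2 : ℂ)⁻¹ • (Pi.single (fun _ => 0) 1 + Pi.single (fun _ => 1) 1)

/-- A state is an `N`-GHZ state if it is a local-unitary image of `ghzN N`. -/
def IsGHZ {N : ℕ} (ψ : (Fin N → Fin 2) → ℂ) : Prop :=
  ∃ U : Fin N → Matrix (Fin 2) (Fin 2) ℂ,
    (∀ l, U l ∈ Matrix.unitaryGroup (Fin 2) ℂ) ∧
    ψ = (tensorN U).mulVec (ghzN N)

namespace GHZaux

open Complex

noncomputable def pX : Matrix (Fin 2) (Fin 2) ℂ := !![0, 1; 1, 0]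

def negb : Fin 2 → Fin 2 := fun b => if b = 0 then 1 else 0

lemma two_cases (b : Fin 2) : b = 0 ∨ b = 1 := by fin_cases b <;> simp

lemma negb_negb (b : Fin 2) : negb (negb b) = b := by fin_cases b <;> rfl

lemma eq_of_ne_negb {a b : Fin 2} (h : a ≠ negb b) : a = b := by
  fin_cases a <;> fin_cases b <;> simp_all [negb]

def flip {N : ℕ} (i : Fin N → Fin 2) : Fin N → Fin 2 := fun l => negb (i l)

lemma flip_flip {N : ℕ} (i : Fin N → Fin 2) : flip (flip i) = i :=
  funext fun l => negb_negb _

lemma flip_zero {N : ℕ} : flip (fun _ : Fin N => (0 : Fin 2)) = fun _ => 1 := rfl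

lemma flip_one {N : ℕ} : flip (fun _ : Fin N => (1 : Fin 2)) = fun _ => 0 := rfl

lemma flip_eq_iff_zero {N : ℕ} (i : Fin N → Fin 2) :
    flip i = (fun _ => 0) ↔ i = (fun _ => 1) := by
  constructor
  · intro h; rw [← flip_flip i, h]; rfl
  · intro h; rw [h]; rfl

lemma flip_eq_iff_one {N : ℕ} (i : Fin N → Fin 2) :
    flip i = (fun _ => 1) ↔ i = (fun _ => 0) := by
  constructor
  · intro h; rw [← flip_flip i, h]; rfl
  · intro h; rw [h]; rfl

lemma tensorN_mul {N : ℕ} (M M' : Fin N → Matrix (Fin 2) (Fin 2) ℂ) :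
    tensorN (fun l => M l * M' l) = tensorN M * tensorN M' := by
  ext i j
  simp only [tensorN, Matrix.mul_apply]
  rw [Fintype.prod_sum]
  exact Finset.sum_congr rfl fun k _ => by rw [Finset.prod_mul_distrib]

lemma tensorN_conjTranspose {N : ℕ} (M : Fin N → Matrix (Fin 2) (Fin 2) ℂ) :
    (tensorN M)ᴴ = tensorN (fun l => (M l)ᴴ) := by
  ext i j
  simp only [tensorN, Matrix.conjTranspose_apply, star_prod]

lemma tensorN_one {N : ℕ} :
    tensorN (fun _ : Fin N => (1 : Matrix (Fin 2) (Fin 2) ℂ)) = 1 := by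
  ext i j
  by_cases h : i = j
  · subst h
    simp [tensorN, Matrix.one_apply]
  · have : ∃ l, i l ≠ j l := by
      by_contra h'; push_neg at h'; exact h (funext h')
    obtain ⟨l, hl⟩ := this
    rw [Matrix.one_apply_ne h]
    exact Finset.prod_eq_zero (mem_univ l) (Matrix.one_apply_ne hl)

lemma tensorN_unitary {N : ℕ} (U : Fin N → Matrix (Fin 2) (Fin 2) ℂ)
    (hU : ∀ l, U l ∈ Matrix.unitaryGroup (Fin 2) ℂ) :
    tensorN U * (tensorN U)ᴴ = 1 ∧ (tensorN U)ᴴ * tensorN U = 1 := by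
  constructor
  · rw [tensorN_conjTranspose, ← tensorN_mul]
    rw [show (fun l => U l * (U l)ᴴ) = fun _ : Fin N => (1 : Matrix (Fin 2) (Fin 2) ℂ) from
      funext fun l => by
        have := (Matrix.mem_unitaryGroup_iff).mp (hU l)
        rwa [Matrix.star_eq_conjTranspose] at this]
    exact tensorN_one
  · rw [tensorN_conjTranspose, ← tensorN_mul]
    rw [show (fun l => (U l)ᴴ * U l) = fun _ : Fin N => (1 : Matrix (Fin 2) (Fin 2) ℂ) from
      funext fun l => by
        have := (Matrix.mem_unitaryGroup_iff').mp (hU l)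
        rwa [Matrix.star_eq_conjTranspose] at this]
    exact tensorN_one

lemma mulVec_offdiag {N : ℕ} (M : Fin N → Matrix (Fin 2) (Fin 2) ℂ)
    (h : ∀ l b, M l b b = 0) (χ : (Fin N → Fin 2) → ℂ) (i : Fin N → Fin 2) :
    (tensorN M).mulVec χ i = (∏ l, M l (i l) (negb (i l))) * χ (flip i) := by
  simp only [Matrix.mulVec, dotProduct, tensorN]
  rw [Finset.sum_eq_single (flip i)]
  · rfl
  · intro j _ hj
    have : ∃ l, j l ≠ negb (i l) := by
      by_contra h'; push_neg at h'; exact hj (funext h')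
    obtain ⟨l, hl⟩ := this
    have hji : j l = i l := eq_of_ne_negb hl
    have hz : M l (i l) (j l) = 0 := by rw [hji]; exact h l _
    exact mul_eq_zero_of_left (Finset.prod_eq_zero (mem_univ l) hz) _
  · intro hni; exact absurd (mem_univ _) hni

/-- weight of a bit -/
noncomputable def wt : Fin 2 → ℝ := fun b => if b = 0 then 0 else 1

/-- sign of a bit -/
noncomputable def sgn : Fin 2 → ℝ := fun b => if b = 0 then -1 else 1

lemma pX_diag (b : Fin 2) : pX b b = 0 := by fin_cases b <;> simp [pX]

lemma spinA_diag (γ : ℝ) (b : Fin 2) : spinA (Real.pi / 2) γ b b = 0 := by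
  fin_cases b <;> simp [spinA, Real.cos_pi_div_two]

lemma A_action {N : ℕ} (χ : (Fin N → Fin 2) → ℂ) (i : Fin N → Fin 2) :
    (tensorN (fun _ : Fin N => pX)).mulVec χ i = χ (flip i) := by
  rw [mulVec_offdiag _ (fun l b => pX_diag b)]
  have : ∀ l : Fin N, pX (i l) (negb (i l)) = 1 := by
    intro l; rcases two_cases (i l) with h | h <;> rw [h] <;> simp [pX, negb]
  rw [Finset.prod_congr rfl (fun l _ => this l)]
  simp

lemma B_action {N : ℕ} (γ : Fin N → ℝ) (χ : (Fin N → Fin 2) → ℂ) (i : Fin N → Fin 2) :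
    (tensorN (fun l => spinA (Real.pi / 2) (γ l))).mulVec χ i
      = Complex.exp (((∑ l, sgn (i l) * γ l : ℝ) : ℂ) * Complex.I) * χ (flip i) := by
  rw [mulVec_offdiag _ (fun l b => spinA_diag (γ l) b)]
  congr 1
  have key : ∀ l : Fin N, spinA (Real.pi / 2) (γ l) (i l) (negb (i l))
      = Complex.exp (((sgn (i l) * γ l : ℝ) : ℂ) * Complex.I) := by
    intro l
    rcases two_cases (i l) with h | h <;> rw [h] <;>
      simp [spinA, negb, sgn, Real.sin_pi_div_two]
  rw [Finset.prod_congr rfl (fun l _ => key l), ← Complex.exp_sum]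
  congr 1
  push_cast
  rw [Finset.sum_mul]

lemma exp_real_mul_I_eq_one_iff (x : ℝ) :
    Complex.exp ((x : ℂ) * Complex.I) = 1 ↔ ∃ k : ℤ, x = k * (2 * Real.pi) := by
  rw [Complex.exp_eq_one_iff]
  constructor
  · rintro ⟨n, hn⟩
    refine ⟨n, ?_⟩
    have h : (x : ℂ) = (n : ℂ) * (2 * (Real.pi : ℂ)) := by
      apply mul_right_cancel₀ Complex.I_ne_zero
      rw [hn]; ring
    exact_mod_cast h
  · rintro ⟨k, hk⟩
    exact ⟨k, by rw [hk]; push_cast; ring⟩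

lemma zero_ne_one_fun {N : ℕ} (hN : 0 < N) :
    (fun _ : Fin N => (0 : Fin 2)) ≠ fun _ => 1 := by
  intro h
  have := congrFun h ⟨0, hN⟩
  simp at this

lemma ghz_apply {N : ℕ} (i : Fin N → Fin 2) :
    ghzN N i = (Real.sqrt 2 : ℂ)⁻¹ *
      ((if i = (fun _ => 0) then 1 else 0) + (if i = (fun _ => 1) then 1 else 0)) := by
  simp [ghzN, Pi.single_apply]

lemma sqrt2_ne : (Real.sqrt 2 : ℂ) ≠ 0 := by
  simp only [ne_eq, Complex.ofReal_eq_zero]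
  positivity

lemma ghz_flip {N : ℕ} (i : Fin N → Fin 2) : ghzN N (flip i) = ghzN N i := by
  rw [ghz_apply, ghz_apply]
  simp only [flip_eq_iff_zero, flip_eq_iff_one]
  ring

/-- The main spectral lemma: for suitable angles, the joint +1 eigenspace of
`X^{⊗N}` and `⊗ spinA(π/2, γ_l)` is spanned by the GHZ state. -/
lemma key_set {N : ℕ} (hN : 0 < N) (γ : Fin N → ℝ)
    (hsum : ∑ l, γ l = 0)
    (hkey : ∀ i : Fin N → Fin 2, (∃ k : ℤ, ∑ l, sgn (i l) * γ l = k * (2 * Real.pi)) →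
      i = (fun _ => 0) ∨ i = (fun _ => 1)) :
    {χ : (Fin N → Fin 2) → ℂ |
        (tensorN (fun _ => pX)).mulVec χ = χ ∧
        (tensorN (fun l => spinA (Real.pi / 2) (γ l))).mulVec χ = χ}
      = ↑(Submodule.span ℂ {ghzN N}) := by
  ext χ
  simp only [Set.mem_setOf_eq, SetLike.mem_coe, Submodule.mem_span_singleton]
  constructor
  · rintro ⟨h1, h2⟩
    have hA : ∀ i, χ (flip i) = χ i := by
      intro i
      have := congrFun h1 i
      rwa [A_action] at this
    have hB : ∀ i, Complex.exp (((∑ l, sgn (i l) * γ l : ℝ) : ℂ) * Complex.I) * χ (flip i)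
        = χ i := by
      intro i
      have := congrFun h2 i
      rwa [B_action] at this
    have hvanish : ∀ i, i ≠ (fun _ => 0) → i ≠ (fun _ => 1) → χ i = 0 := by
      intro i hi0 hi1
      by_contra hne
      have h' := hB i
      rw [hA i] at h'
      have : Complex.exp (((∑ l, sgn (i l) * γ l : ℝ) : ℂ) * Complex.I) = 1 := by
        have h'' : (Complex.exp (((∑ l, sgn (i l) * γ l : ℝ) : ℂ) * Complex.I) - 1) * χ i = 0 := by
          linear_combination h'
        rcases mul_eq_zero.mp h'' with h3 | h3
        · exact sub_eq_zero.mp h3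
        · exact absurd h3 hne
      obtain ⟨k, hk⟩ := (exp_real_mul_I_eq_one_iff _).mp this
      rcases hkey i ⟨k, hk⟩ with h | h
      · exact hi0 h
      · exact hi1 h
    refine ⟨(Real.sqrt 2 : ℂ) * χ (fun _ => 0), funext fun i => ?_⟩
    rw [Pi.smul_apply, smul_eq_mul, ghz_apply]
    by_cases e0 : i = (fun _ => 0)
    · subst e0
      rw [if_pos rfl, if_neg (zero_ne_one_fun hN)]
      field_simp
      simp
    · by_cases e1 : i = (fun _ => 1)
      · subst e1
        rw [if_neg (fun h => zero_ne_one_fun hN h.symm), if_pos rfl]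
        have : χ (fun _ : Fin N => (1 : Fin 2)) = χ (fun _ => 0) := by
          rw [← flip_zero, hA]
        rw [this]
        field_simp
        simp
      · rw [if_neg e0, if_neg e1, hvanish i e0 e1]
        ring
  · rintro ⟨a, ha⟩
    subst ha
    constructor
    · rw [Matrix.mulVec_smul]
      congr 1
      funext i
      rw [A_action, ghz_flip]
    · rw [Matrix.mulVec_smul]
      congr 1
      funext i
      rw [B_action]
      by_cases e0 : i = (fun _ => 0)
      · subst e0
        have hθ : (∑ l, sgn ((fun _ : Fin N => (0 : Fin 2)) l) * γ l) = 0 := by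
          simp only [sgn, if_pos rfl]
          simp [hsum, Finset.sum_neg_distrib]
        rw [hθ, ghz_flip]
        simp
      · by_cases e1 : i = (fun _ => 1)
        · subst e1
          have hθ : (∑ l, sgn ((fun _ : Fin N => (1 : Fin 2)) l) * γ l) = 0 := by
            simp only [sgn]
            simpa using hsum
          rw [hθ, ghz_flip]
          simp
        · have hz : ghzN N (flip i) = 0 := by
            rw [ghz_apply, if_neg, if_neg]
            · ring
            · rw [flip_eq_iff_one]; exact e0
            · rw [flip_eq_iff_zero]; exact e1
          have hz' : ghzN N i = 0 := by
            rw [ghz_apply, if_neg e0, if_neg e1]; ring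
          rw [hz, hz', mul_zero]

noncomputable def Pmat (γ : ℝ) : Matrix (Fin 2) (Fin 2) ℂ :=
  !![1, 1; Complex.exp ((γ : ℂ) * Complex.I), -Complex.exp ((γ : ℂ) * Complex.I)]

noncomputable def Vmat (γ : ℝ) : Matrix (Fin 2) (Fin 2) ℂ :=
  (Real.sqrt 2 : ℂ)⁻¹ • Pmat γ

lemma sqrt2_sq : (Real.sqrt 2 : ℂ) * (Real.sqrt 2 : ℂ) = 2 := by
  rw [← Complex.ofReal_mul, Real.mul_self_sqrt (by norm_num)]
  norm_num

lemma sqrt2_ne' : (Real.sqrt 2 : ℂ) ≠ 0 := by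
  simp only [ne_eq, Complex.ofReal_eq_zero]
  positivity

lemma star_inv_sqrt2 : star ((Real.sqrt 2 : ℂ)⁻¹) = (Real.sqrt 2 : ℂ)⁻¹ := by
  simp [Complex.star_def, Complex.conj_ofReal]

lemma inv_sqrt2_mul : (Real.sqrt 2 : ℂ)⁻¹ * (Real.sqrt 2 : ℂ)⁻¹ * 2 = 1 := by
  rw [← mul_inv, sqrt2_sq]
  norm_num

lemma conj_exp_I (γ : ℝ) :
    (starRingEnd ℂ) (Complex.exp ((γ : ℂ) * Complex.I)) = Complex.exp (-((γ : ℂ) * Complex.I)) := by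
  rw [← Complex.exp_conj]
  congr 1
  simp [Complex.conj_I]

lemma exp_I_cs (γ : ℝ) :
    Complex.exp ((γ : ℂ) * Complex.I) = (Real.cos γ : ℂ) + (Real.sin γ : ℂ) * Complex.I := by
  rw [Complex.exp_mul_I, Complex.ofReal_cos, Complex.ofReal_sin]

lemma exp_neg_I_cs (γ : ℝ) :
    Complex.exp (-((γ : ℂ) * Complex.I)) = (Real.cos γ : ℂ) - (Real.sin γ : ℂ) * Complex.I := by
  have h := exp_I_cs (-γ)
  simp only [Real.cos_neg, Real.sin_neg, Complex.ofReal_neg] at h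
  rw [show -((γ : ℂ) * Complex.I) = (-(γ : ℂ)) * Complex.I by ring, h]
  ring

lemma exp_pi2_I : Complex.exp ((Real.pi : ℂ) / 2 * Complex.I) = Complex.I := by
  rw [show (Real.pi : ℂ) / 2 * Complex.I = ((Real.pi / 2 : ℝ) : ℂ) * Complex.I by push_cast; ring,
    exp_I_cs, Real.cos_pi_div_two, Real.sin_pi_div_two]
  norm_num

lemma exp_neg_pi2_I : Complex.exp (-((Real.pi : ℂ) / 2 * Complex.I)) = -Complex.I := by
  rw [show -((Real.pi : ℂ) / 2 * Complex.I) = ((Real.pi / 2 : ℝ) : ℂ) * Complex.I * (-1) by push_cast; ring]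
  rw [show ((Real.pi / 2 : ℝ) : ℂ) * Complex.I * (-1) = ((-(Real.pi / 2) : ℝ) : ℂ) * Complex.I by push_cast; ring,
    exp_I_cs, Real.cos_neg, Real.sin_neg, Real.cos_pi_div_two, Real.sin_pi_div_two]
  push_cast
  ring

lemma cs_sq (γ : ℝ) :
    (Real.cos γ : ℂ) * (Real.cos γ : ℂ) + (Real.sin γ : ℂ) * (Real.sin γ : ℂ) = 1 := by
  have h : (Real.cos γ * Real.cos γ + Real.sin γ * Real.sin γ : ℝ) = 1 := by
    nlinarith [Real.sin_sq_add_cos_sq γ]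
  calc (Real.cos γ : ℂ) * (Real.cos γ : ℂ) + (Real.sin γ : ℂ) * (Real.sin γ : ℂ)
      = ((Real.cos γ * Real.cos γ + Real.sin γ * Real.sin γ : ℝ) : ℂ) := by push_cast; ring
    _ = 1 := by rw [h]; norm_num

lemma conj_factor (P S T : Matrix (Fin 2) (Fin 2) ℂ) (h : P * S * Pᴴ = (2 : ℂ) • T) :
    ((Real.sqrt 2 : ℂ)⁻¹ • P) * S * ((Real.sqrt 2 : ℂ)⁻¹ • P)ᴴ = T := by
  rw [Matrix.conjTranspose_smul, star_inv_sqrt2, Matrix.smul_mul, Matrix.smul_mul,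
    Matrix.mul_smul, h, smul_smul, smul_smul, inv_sqrt2_mul, one_smul]

lemma Pmat_unit (γ : ℝ) :
    Pmat γ * (Pmat γ)ᴴ = (2 : ℂ) • (1 : Matrix (Fin 2) (Fin 2) ℂ) := by
  have hcs := cs_sq γ
  ext i j
  fin_cases i <;> fin_cases j <;>
    simp [Pmat, Matrix.mul_apply, Matrix.conjTranspose_apply, Fin.sum_univ_two,
      Matrix.one_apply, Matrix.smul_apply, smul_eq_mul, Complex.conj_ofReal,
      conj_exp_I, exp_I_cs, exp_neg_I_cs, ← Complex.ofReal_cos, ← Complex.ofReal_sin] <;>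
    first
      | ring1
      | linear_combination (2 : ℂ) * hcs
      | linear_combination hcs
      | linear_combination -hcs
      | linear_combination (-2 : ℂ) * hcs
      | linear_combination (2 : ℂ) * hcs - 2 * (Real.sin γ : ℂ) ^ 2 * Complex.I_sq
      | linear_combination (2 : ℂ) * hcs + 2 * (Real.sin γ : ℂ) ^ 2 * Complex.I_sq

lemma Vmat_unitary (γ : ℝ) : Vmat γ ∈ Matrix.unitaryGroup (Fin 2) ℂ := by
  rw [Matrix.mem_unitaryGroup_iff, Matrix.star_eq_conjTranspose]
  have h := conj_factor (Pmat γ) 1 1 (by rw [Matrix.mul_one]; simpa using Pmat_unit γ)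
  rw [Matrix.mul_one] at h
  exact h

lemma Pmat_spinA (γ : ℝ) :
    Pmat γ * spinA γ (Real.pi / 2) * (Pmat γ)ᴴ = (2 : ℂ) • pX := by
  have hcs := cs_sq γ
  ext i j
  fin_cases i <;> fin_cases j <;>
    simp [Pmat, spinA, pX, Matrix.mul_apply, Matrix.conjTranspose_apply, Fin.sum_univ_two,
      Matrix.smul_apply, smul_eq_mul, Complex.conj_ofReal,
      conj_exp_I, exp_I_cs, exp_neg_I_cs, exp_pi2_I, exp_neg_pi2_I,
      ← Complex.ofReal_cos, ← Complex.ofReal_sin,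
      Real.cos_pi_div_two, Real.sin_pi_div_two] <;>
    first
      | ring1
      | linear_combination (2 : ℂ) * hcs
      | linear_combination hcs
      | linear_combination -hcs
      | linear_combination (-2 : ℂ) * hcs
      | linear_combination (2 : ℂ) * hcs - 2 * (Real.sin γ : ℂ) ^ 2 * Complex.I_sq
      | linear_combination (2 : ℂ) * hcs + 2 * (Real.sin γ : ℂ) ^ 2 * Complex.I_sq
      | linear_combination (-2 : ℂ) * hcs + 2 * (Real.sin γ : ℂ) ^ 2 * Complex.I_sq
      | linear_combination (-2 : ℂ) * hcs - 2 * (Real.sin γ : ℂ) ^ 2 * Complex.I_sq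

lemma Pmat_Z (γ : ℝ) :
    Pmat γ * sigmaZ * (Pmat γ)ᴴ = (2 : ℂ) • spinA (Real.pi / 2) γ := by
  have hcs := cs_sq γ
  ext i j
  fin_cases i <;> fin_cases j <;>
    simp [Pmat, spinA, sigmaZ, Matrix.mul_apply, Matrix.conjTranspose_apply, Fin.sum_univ_two,
      Matrix.smul_apply, smul_eq_mul, Complex.conj_ofReal,
      conj_exp_I, exp_I_cs, exp_neg_I_cs,
      ← Complex.ofReal_cos, ← Complex.ofReal_sin,
      Real.cos_pi_div_two, Real.sin_pi_div_two] <;>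
    first
      | ring1
      | linear_combination (2 : ℂ) * hcs
      | linear_combination hcs
      | linear_combination -hcs
      | linear_combination (-2 : ℂ) * hcs

lemma Vmat_spinA (γ : ℝ) :
    Vmat γ * spinA γ (Real.pi / 2) * (Vmat γ)ᴴ = pX :=
  conj_factor _ _ _ (Pmat_spinA γ)

lemma Vmat_Z (γ : ℝ) :
    Vmat γ * sigmaZ * (Vmat γ)ᴴ = spinA (Real.pi / 2) γ :=
  conj_factor _ _ _ (Pmat_Z γ)

noncomputable def gPre (M : ℕ) : Fin M → ℝ := fun l => Real.pi * (1/3) ^ ((l : ℕ) + 1)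

noncomputable def gam (M : ℕ) : Fin (M + 1) → ℝ := Fin.snoc (gPre M) (-(∑ l, gPre M l))

lemma gPre_pos {M : ℕ} (l : Fin M) : 0 < gPre M l :=
  mul_pos Real.pi_pos (by positivity)

lemma range_geom_lt (n : ℕ) : ∑ j ∈ Finset.range n, ((1 : ℝ)/3) ^ (j + 1) < 1/2 := by
  have key : ∀ n : ℕ, ∑ j ∈ Finset.range n, ((1 : ℝ)/3) ^ (j + 1) ≤ 1/2 - (1/2) * (1/3)^n := by
    intro n
    induction n with
    | zero => simp
    | succ n ih =>
      rw [Finset.sum_range_succ, pow_succ]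
      linarith
  have := key n
  have hp : (0:ℝ) < (1/3)^n := by positivity
  linarith

lemma gPre_sum_lt (M : ℕ) : ∑ l, gPre M l < Real.pi / 2 := by
  have h1 : ∑ l : Fin M, gPre M l = Real.pi * ∑ j ∈ Finset.range M, ((1:ℝ)/3)^(j+1) := by
    rw [Finset.mul_sum]
    rw [← Fin.sum_univ_eq_sum_range (fun j => Real.pi * ((1:ℝ)/3)^(j+1)) M]
    rfl
  rw [h1]
  have := range_geom_lt M
  have hπ := Real.pi_pos
  nlinarith

lemma gam_sum (M : ℕ) : ∑ l, gam M l = 0 := by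
  rw [Fin.sum_univ_castSucc]
  simp [gam]

lemma wt_cases (b : Fin 2) : wt b = 0 ∧ b = 0 ∨ wt b = 1 ∧ b = 1 := by
  rcases two_cases b with h | h <;> subst h <;> simp [wt]

lemma gam_key (M : ℕ) (i : Fin (M + 1) → Fin 2)
    (h : ∃ k : ℤ, ∑ l, sgn (i l) * gam M l = k * (2 * Real.pi)) :
    i = (fun _ => 0) ∨ i = (fun _ => 1) := by
  obtain ⟨k, hk⟩ := h
  have hπ := Real.pi_pos
  set S := ∑ l, wt (i l) * gam M l with hS
  have h2S : 2 * S = ∑ l, sgn (i l) * gam M l + ∑ l, gam M l := by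
    rw [hS, Finset.mul_sum, ← Finset.sum_add_distrib]
    apply Finset.sum_congr rfl
    intro l _
    rcases two_cases (i l) with h' | h' <;> rw [h'] <;> simp [wt, sgn] <;> ring
  have hSπ : S = k * Real.pi := by
    rw [hk, gam_sum] at h2S
    linarith
  set T := ∑ l : Fin M, wt (i (Fin.castSucc l)) * gPre M l with hT
  have hsplit : S = T - wt (i (Fin.last M)) * ∑ l, gPre M l := by
    rw [hT, hS, Fin.sum_univ_castSucc]
    simp only [gam, Fin.snoc_castSucc, Fin.snoc_last]
    ring
  have hT0 : 0 ≤ T := by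
    apply Finset.sum_nonneg
    intro l _
    rcases wt_cases (i (Fin.castSucc l)) with ⟨h', _⟩ | ⟨h', _⟩ <;> rw [h'] <;>
      [simp; simp [le_of_lt (gPre_pos l)]]
  have hT1 : T ≤ ∑ l, gPre M l := by
    apply Finset.sum_le_sum
    intro l _
    rcases wt_cases (i (Fin.castSucc l)) with ⟨h', _⟩ | ⟨h', _⟩ <;> rw [h'] <;>
      simp [le_of_lt (gPre_pos l)]
  have hTlt := gPre_sum_lt M
  rcases wt_cases (i (Fin.last M)) with ⟨hw, hb⟩ | ⟨hw, hb⟩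
  · -- last bit is 0 : S = T, 0 ≤ S < π/2, so k = 0 and T = 0
    rw [hw] at hsplit
    have hST : S = T := by rw [hsplit]; ring
    have hk0 : k = 0 := by
      by_contra h'
      rcases lt_or_gt_of_ne h' with h'' | h''
      · have hk1 : k ≤ -1 := by omega
        have : (k : ℝ) ≤ -1 := by exact_mod_cast hk1
        nlinarith
      · have : (1 : ℝ) ≤ (k : ℝ) := by exact_mod_cast h''
        nlinarith
    have hT0' : T = 0 := by rw [← hST, hSπ, hk0]; simp
    left
    funext l
    induction l using Fin.lastCases with
    | last => exact hb
    | cast l =>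
      have := (Finset.sum_eq_zero_iff_of_nonneg (fun l _ => by
        rcases wt_cases (i (Fin.castSucc l)) with ⟨h', _⟩ | ⟨h', _⟩ <;> rw [h'] <;>
          [simp; simp [le_of_lt (gPre_pos l)]])).mp hT0' l (mem_univ l)
      rcases wt_cases (i (Fin.castSucc l)) with ⟨h', hb'⟩ | ⟨h', hb'⟩
      · exact hb'
      · rw [h', one_mul] at this
        exact absurd this (ne_of_gt (gPre_pos l))
  · -- last bit is 1 : S = T - Σg ∈ (-π/2, 0], so k = 0 and T = Σg
    rw [hw, one_mul] at hsplit
    have hk0 : k = 0 := by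
      by_contra h'
      rcases lt_or_gt_of_ne h' with h'' | h''
      · have hk1 : k ≤ -1 := by omega
        have : (k : ℝ) ≤ -1 := by exact_mod_cast hk1
        nlinarith
      · have : (1 : ℝ) ≤ (k : ℝ) := by exact_mod_cast h''
        nlinarith
    have hTfull : ∑ l : Fin M, (1 - wt (i (Fin.castSucc l))) * gPre M l = 0 := by
      have hT' : T = ∑ l, gPre M l := by
        rw [hSπ, hk0] at hsplit; push_cast at hsplit; linarith
      have heq : ∑ l : Fin M, (1 - wt (i (Fin.castSucc l))) * gPre M l
          = ∑ l, gPre M l - T := by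
        rw [hT, ← Finset.sum_sub_distrib]
        apply Finset.sum_congr rfl
        intro l _
        ring
      rw [heq, hT']
      ring
    right
    funext l
    induction l using Fin.lastCases with
    | last => exact hb
    | cast l =>
      have := (Finset.sum_eq_zero_iff_of_nonneg (fun l _ => by
        rcases wt_cases (i (Fin.castSucc l)) with ⟨h', _⟩ | ⟨h', _⟩ <;> rw [h'] <;>
          [simp [le_of_lt (gPre_pos l)]; simp])).mp hTfull l (mem_univ l)
      rcases wt_cases (i (Fin.castSucc l)) with ⟨h', hb'⟩ | ⟨h', hb'⟩
      · rw [h'] at this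
        norm_num at this
        exact absurd this (ne_of_gt (gPre_pos l))
      · exact hb'

lemma tensorN_conj {N : ℕ} (U C : Fin N → Matrix (Fin 2) (Fin 2) ℂ) :
    tensorN (fun l => U l * C l * (U l)ᴴ) = tensorN U * tensorN C * (tensorN U)ᴴ := by
  rw [tensorN_conjTranspose, ← tensorN_mul, ← tensorN_mul]

end GHZaux

theorem stmt2 (N : ℕ) (hN : 2 ≤ N) (ψ : (Fin N → Fin 2) → ℂ) (hψ : IsGHZ ψ) :
    ∃ (θ φ : Fin N → ℝ) (V : Fin N → Matrix (Fin 2) (Fin 2) ℂ),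
      (∀ l, V l ∈ Matrix.unitaryGroup (Fin 2) ℂ) ∧
      {χ : (Fin N → Fin 2) → ℂ |
          (tensorN (fun l => V l * spinA (θ l) (φ l) * (V l)ᴴ)).mulVec χ = χ ∧
          (tensorN (fun l => V l * sigmaZ * (V l)ᴴ)).mulVec χ = χ}
        = ↑(Submodule.span ℂ {ψ}) := by
  obtain ⟨M, rfl⟩ : ∃ M, N = M + 1 := ⟨N - 1, by omega⟩
  obtain ⟨U, hU, hψdef⟩ := hψ
  refine ⟨GHZaux.gam M, fun _ => Real.pi / 2, fun l => U l * GHZaux.Vmat (GHZaux.gam M l),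
    fun l => mul_mem (hU l) (GHZaux.Vmat_unitary _), ?_⟩
  obtain ⟨hW1, hW2⟩ := GHZaux.tensorN_unitary U hU
  have hconj1 : ∀ l : Fin (M + 1),
      U l * GHZaux.Vmat (GHZaux.gam M l) * spinA (GHZaux.gam M l) (Real.pi / 2) *
        (U l * GHZaux.Vmat (GHZaux.gam M l))ᴴ = U l * GHZaux.pX * (U l)ᴴ := by
    intro l
    rw [Matrix.conjTranspose_mul, ← GHZaux.Vmat_spinA (GHZaux.gam M l)]
    simp only [Matrix.mul_assoc]
  have hconj2 : ∀ l : Fin (M + 1),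
      U l * GHZaux.Vmat (GHZaux.gam M l) * sigmaZ * (U l * GHZaux.Vmat (GHZaux.gam M l))ᴴ
        = U l * spinA (Real.pi / 2) (GHZaux.gam M l) * (U l)ᴴ := by
    intro l
    rw [Matrix.conjTranspose_mul, ← GHZaux.Vmat_Z (GHZaux.gam M l)]
    simp only [Matrix.mul_assoc]
  have e1 : tensorN (fun l => U l * GHZaux.Vmat (GHZaux.gam M l) *
        spinA (GHZaux.gam M l) (Real.pi / 2) * (U l * GHZaux.Vmat (GHZaux.gam M l))ᴴ)
      = tensorN U * tensorN (fun _ => GHZaux.pX) * (tensorN U)ᴴ := by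
    rw [show (fun l => U l * GHZaux.Vmat (GHZaux.gam M l) *
        spinA (GHZaux.gam M l) (Real.pi / 2) * (U l * GHZaux.Vmat (GHZaux.gam M l))ᴴ)
      = fun l => U l * GHZaux.pX * (U l)ᴴ from funext hconj1]
    exact GHZaux.tensorN_conj U _
  have e2 : tensorN (fun l => U l * GHZaux.Vmat (GHZaux.gam M l) * sigmaZ *
        (U l * GHZaux.Vmat (GHZaux.gam M l))ᴴ)
      = tensorN U * tensorN (fun l => spinA (Real.pi / 2) (GHZaux.gam M l)) * (tensorN U)ᴴ := by
    rw [show (fun l => U l * GHZaux.Vmat (GHZaux.gam M l) * sigmaZ *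
        (U l * GHZaux.Vmat (GHZaux.gam M l))ᴴ)
      = fun l => U l * spinA (Real.pi / 2) (GHZaux.gam M l) * (U l)ᴴ from funext hconj2]
    exact GHZaux.tensorN_conj U _
  have hop : ∀ (C : Matrix (Fin (M + 1) → Fin 2) (Fin (M + 1) → Fin 2) ℂ)
      (χ : (Fin (M + 1) → Fin 2) → ℂ),
      ((tensorN U * C * (tensorN U)ᴴ).mulVec χ = χ) ↔
        C.mulVec ((tensorN U)ᴴ.mulVec χ) = (tensorN U)ᴴ.mulVec χ := by
    intro C χ
    constructor
    · intro h
      calc C.mulVec ((tensorN U)ᴴ.mulVec χ)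
          = (tensorN U)ᴴ.mulVec ((tensorN U * C * (tensorN U)ᴴ).mulVec χ) := by
            rw [Matrix.mulVec_mulVec, Matrix.mulVec_mulVec,
              show (tensorN U)ᴴ * (tensorN U * C * (tensorN U)ᴴ) = C * (tensorN U)ᴴ by
                simp only [← Matrix.mul_assoc]; rw [hW2, Matrix.one_mul]]
        _ = (tensorN U)ᴴ.mulVec χ := by rw [h]
    · intro h
      calc (tensorN U * C * (tensorN U)ᴴ).mulVec χ
          = (tensorN U).mulVec (C.mulVec ((tensorN U)ᴴ.mulVec χ)) := by
            rw [Matrix.mulVec_mulVec, Matrix.mulVec_mulVec]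
        _ = (tensorN U).mulVec ((tensorN U)ᴴ.mulVec χ) := by rw [h]
        _ = χ := by rw [Matrix.mulVec_mulVec, hW1, Matrix.one_mulVec]
  ext χ
  simp only [Set.mem_setOf_eq]
  rw [e1, e2, hop, hop]
  have hkeyset := GHZaux.key_set (Nat.succ_pos M) (GHZaux.gam M) (GHZaux.gam_sum M)
    (GHZaux.gam_key M)
  have hmem := (Set.ext_iff.mp hkeyset) ((tensorN U)ᴴ.mulVec χ)
  simp only [Set.mem_setOf_eq] at hmem
  rw [hmem, SetLike.mem_coe, SetLike.mem_coe, Submodule.mem_span_singleton,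
    Submodule.mem_span_singleton]
  constructor
  · rintro ⟨a, ha⟩
    refine ⟨a, ?_⟩
    rw [hψdef]
    calc a • (tensorN U).mulVec (ghzN (M + 1))
        = (tensorN U).mulVec (a • ghzN (M + 1)) := (Matrix.mulVec_smul _ _ _).symm
      _ = (tensorN U).mulVec ((tensorN U)ᴴ.mulVec χ) := by rw [ha]
      _ = χ := by rw [Matrix.mulVec_mulVec, hW1, Matrix.one_mulVec]
  · rintro ⟨a, ha⟩
    refine ⟨a, ?_⟩
    rw [← ha, hψdef]
    rw [Matrix.mulVec_smul, Matrix.mulVec_mulVec, hW2, Matrix.one_mulVec]
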